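/- (Deterministic controllability of the fiber lay-down dynamics.) Let ξ₀, ξ̃ ∈ ℝ², α₀, α̃ ∈ ℝ, ε > 0, and let t > 0 satisfy t ≥ ‖ξ̃ − ξ₀‖. Then there exists a continuous path ᾱ : [0, t] → ℝ with ᾱ(0) = α₀ such that |ᾱ(t) − α̃| < ε and ‖ξ₀ + ∫_0^t (cos ᾱ(s), sin ᾱ(s)) ds − ξ̃‖ < ε. -/

import Mathlib

open MeasureTheory Real

/-- Euclidean distance on `ℝ²` (represented as `ℝ × ℝ`). -/
noncomputable def eDist2 (p q : ℝ × ℝ) : ℝ :=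
  Real.sqrt ((p.1 - q.1) ^ 2 + (p.2 - q.2) ^ 2)

private lemma exists_theta (x y : ℝ) :
    ∃ θ : ℝ, Real.sqrt (x ^ 2 + y ^ 2) * Real.cos θ = x ∧
      Real.sqrt (x ^ 2 + y ^ 2) * Real.sin θ = y := by
  by_cases h : (⟨x, y⟩ : ℂ) = 0
  · have hx : x = 0 := by simpa using congrArg Complex.re h
    have hy : y = 0 := by simpa using congrArg Complex.im h
    exact ⟨0, by simp [hx, hy], by simp [hx, hy]⟩
  · have habs : ‖(⟨x, y⟩ : ℂ)‖ = Real.sqrt (x ^ 2 + y ^ 2) := by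
      rw [Complex.norm_def, Complex.normSq_apply]
      norm_num [pow_two]
    have hne : Real.sqrt (x ^ 2 + y ^ 2) ≠ 0 := by
      rw [← habs]; exact norm_ne_zero_iff.mpr h
    refine ⟨Complex.arg ⟨x, y⟩, ?_, ?_⟩
    · rw [Complex.cos_arg h, habs]
      have hre : (⟨x, y⟩ : ℂ).re = x := rfl
      rw [hre]
      field_simp
    · rw [Complex.sin_arg, habs]
      have him : (⟨x, y⟩ : ℂ).im = y := rfl
      rw [him]
      field_simp

set_option maxHeartbeats 1000000 in
/-- Deterministic controllability of the fiber lay-down dynamics: given initial data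
`(ξ₀, α₀)`, targets `(ξ̃, α̃)`, `ε > 0` and a time `t > 0` with `t ≥ ‖ξ̃ − ξ₀‖`,
there is a continuous angle path `ᾱ` on `[0, t]` starting at `α₀` whose terminal
angle is `ε`-close to `α̃` and which steers the position
`ξ₀ + ∫_0^t (cos ᾱ(s), sin ᾱ(s)) ds` to within `ε` of `ξ̃`. -/
theorem fiber_lay_down_controllability
    (ξ₀ ξtil : ℝ × ℝ) (α₀ αtil ε : ℝ) (hε : 0 < ε)
    (t : ℝ) (ht : 0 < t) (hdist : eDist2 ξtil ξ₀ ≤ t) :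
    ∃ ᾱ : ℝ → ℝ, ContinuousOn ᾱ (Set.Icc 0 t) ∧ ᾱ 0 = α₀ ∧
      |ᾱ t - αtil| < ε ∧
      eDist2 (ξ₀.1 + ∫ s in (0:ℝ)..t, Real.cos (ᾱ s),
              ξ₀.2 + ∫ s in (0:ℝ)..t, Real.sin (ᾱ s)) ξtil < ε := by
  unfold eDist2 at hdist
  obtain ⟨θ, hx, hy⟩ := exists_theta (ξtil.1 - ξ₀.1) (ξtil.2 - ξ₀.2)
  set d := Real.sqrt ((ξtil.1 - ξ₀.1) ^ 2 + (ξtil.2 - ξ₀.2) ^ 2) with hdd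
  have hd0 : 0 ≤ d := Real.sqrt_nonneg _
  set δ := min (t / 4) (ε / 6) with hδdef
  have hδ0 : 0 < δ := lt_min (by linarith) (by linarith)
  have hδt : δ ≤ t / 4 := min_le_left _ _
  have hδε : δ ≤ ε / 6 := min_le_right _ _
  set m := min d (t - 2 * δ) with hmdef
  have hm0 : 0 ≤ m := le_min hd0 (by linarith)
  have hmd : m ≤ d := min_le_left _ _
  have hdm : d - m ≤ 2 * δ := by
    rcases le_total d (t - 2 * δ) with h | h
    · have : m = d := min_eq_left h
      linarith
    · have : m = t - 2 * δ := min_eq_right h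
      linarith
  set b := δ + m with hbdef
  set c := t - δ with hcdef
  have hδb : δ ≤ b := by rw [hbdef]; linarith
  have hbc : b ≤ c := by
    have : m ≤ t - 2 * δ := min_le_right _ _
    rw [hbdef, hcdef]; linarith
  have hct : c ≤ t := by rw [hcdef]; linarith
  set Λ := c - b with hΛdef
  have hΛ0 : 0 ≤ Λ := by rw [hΛdef]; linarith
  set ω := if Λ = 0 then (0:ℝ) else 2 * π / Λ with hωdef
  set A : ℝ → ℝ := fun s =>
    α₀ + (θ - α₀) * (min s δ) / δ + ω * (min s c - min s b)
      + (αtil - θ - ω * Λ) * (s - min s c) / δ with hAdef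
  have hcont : Continuous A := by
    rw [hAdef]
    exact ((continuous_const.add
        ((continuous_const.mul (continuous_id.min continuous_const)).div_const δ)).add
        (continuous_const.mul ((continuous_id.min continuous_const).sub
          (continuous_id.min continuous_const)))).add
        ((continuous_const.mul (continuous_id.sub
          (continuous_id.min continuous_const))).div_const δ)
  have hA0 : A 0 = α₀ := by
    rw [hAdef]
    simp only
    rw [min_eq_left hδ0.le, min_eq_left (by linarith : (0:ℝ) ≤ c),
      min_eq_left (by linarith : (0:ℝ) ≤ b)]
    ring
  have hAt : A t = αtil := by
    rw [hAdef]
    simp only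
    rw [min_eq_right (by linarith : δ ≤ t), min_eq_right hct,
      min_eq_right (le_trans hbc hct)]
    have hc : t - c = δ := by rw [hcdef]; ring
    rw [hc, hΛdef]
    field_simp
    ring
  have hseg1 : ∀ s ∈ Set.uIcc δ b, A s = θ := by
    intro s hs
    rw [Set.uIcc_of_le hδb] at hs
    obtain ⟨h1, h2⟩ := hs
    rw [hAdef]
    simp only
    rw [min_eq_right h1, min_eq_left h2, min_eq_left (le_trans h2 hbc)]
    field_simp
    ring
  have hseg2 : ∀ s ∈ Set.uIcc b c, A s = θ + ω * (s - b) := by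
    intro s hs
    rw [Set.uIcc_of_le hbc] at hs
    obtain ⟨h1, h2⟩ := hs
    rw [hAdef]
    simp only
    rw [min_eq_right (le_trans hδb h1), min_eq_right h1, min_eq_left h2]
    field_simp
    ring
  -- the circle piece integrates to zero
  have hcircle : ∀ f F : ℝ → ℝ,
      (∀ a' b' : ℝ, ∫ x in a'..b', f x = F b' - F a') →
      (∀ x, F (x + 2 * π) = F x) →
      (∫ s in b..c, f (A s)) = 0 := by
    intro f F hF hper
    rcases eq_or_ne Λ 0 with hΛ | hΛ
    · have hcb : c = b := by
        have := hΛdef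
        rw [hΛ] at this
        linarith
      rw [hcb, intervalIntegral.integral_same]
    · have hΛpos : 0 < Λ := lt_of_le_of_ne hΛ0 (Ne.symm hΛ)
      have hω : ω = 2 * π / Λ := if_neg hΛ
      have hωΛ : ω * Λ = 2 * π := by
        rw [hω]; field_simp
      have hωne : ω ≠ 0 := by
        rw [hω]
        positivity
      rw [intervalIntegral.integral_congr
        (g := fun s => f (ω * s + (θ - ω * b)))
        (fun s hs => by rw [hseg2 s hs]; congr 1; ring)]
      rw [intervalIntegral.integral_comp_mul_add f hωne (θ - ω * b), hF]
      have e1 : ω * c + (θ - ω * b) = θ + 2 * π := by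
        rw [← hωΛ, hΛdef]; ring
      have e2 : ω * b + (θ - ω * b) = θ := by ring
      rw [e1, e2, hper, sub_self, smul_zero]
  -- key estimate for each coordinate
  have key : ∀ f : ℝ → ℝ, Continuous f → (∀ x, |f x| ≤ 1) →
      (∫ s in b..c, f (A s)) = 0 →
      |(∫ s in (0:ℝ)..t, f (A s)) - m * f θ| ≤ 2 * δ := by
    intro f hf hbd hzero
    have hint : ∀ u v : ℝ, IntervalIntegrable (fun s => f (A s)) volume u v :=
      fun u v => (hf.comp hcont).intervalIntegrable u v
    have hsplit : (∫ s in (0:ℝ)..t, f (A s)) =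
        (∫ s in (0:ℝ)..δ, f (A s)) + (∫ s in δ..b, f (A s))
          + (∫ s in b..c, f (A s)) + (∫ s in c..t, f (A s)) := by
      rw [intervalIntegral.integral_add_adjacent_intervals (hint 0 δ) (hint δ b),
        intervalIntegral.integral_add_adjacent_intervals (hint 0 b) (hint b c),
        intervalIntegral.integral_add_adjacent_intervals (hint 0 c) (hint c t)]
    have h2 : (∫ s in δ..b, f (A s)) = m * f θ := by
      rw [intervalIntegral.integral_congr (g := fun _ => f θ)
        (fun s hs => by rw [hseg1 s hs])]
      rw [intervalIntegral.integral_const, smul_eq_mul]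
      congr 1
      rw [hbdef]; ring
    have h1 : |∫ s in (0:ℝ)..δ, f (A s)| ≤ δ := by
      have := intervalIntegral.norm_integral_le_of_norm_le_const
        (C := 1) (f := fun s => f (A s)) (a := (0:ℝ)) (b := δ)
        (fun x _ => by simpa using hbd (A x))
      simpa [abs_of_nonneg hδ0.le] using this
    have h4 : |∫ s in c..t, f (A s)| ≤ δ := by
      have := intervalIntegral.norm_integral_le_of_norm_le_const
        (C := 1) (f := fun s => f (A s)) (a := c) (b := t)
        (fun x _ => by simpa using hbd (A x))
      have htc : |t - c| = δ := by
        rw [hcdef, abs_of_nonneg (by linarith)]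
        ring
      rw [Real.norm_eq_abs, htc, one_mul] at this
      exact this
    rw [hsplit, hzero, h2]
    have e : (∫ s in (0:ℝ)..δ, f (A s)) + m * f θ + 0 + (∫ s in c..t, f (A s))
        - m * f θ = (∫ s in (0:ℝ)..δ, f (A s)) + (∫ s in c..t, f (A s)) := by
      ring
    rw [e]
    calc |(∫ s in (0:ℝ)..δ, f (A s)) + (∫ s in c..t, f (A s))|
        ≤ |∫ s in (0:ℝ)..δ, f (A s)| + |∫ s in c..t, f (A s)| := abs_add_le _ _
      _ ≤ 2 * δ := by linarith
  have hzc : (∫ s in b..c, Real.cos (A s)) = 0 :=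
    hcircle Real.cos Real.sin (fun a' b' => integral_cos) Real.sin_add_two_pi
  have hzs : (∫ s in b..c, Real.sin (A s)) = 0 :=
    hcircle Real.sin (fun x => -Real.cos x)
      (fun a' b' => by rw [integral_sin]; ring)
      (fun x => by simp [Real.cos_add_two_pi])
  have hcos := key Real.cos Real.continuous_cos Real.abs_cos_le_one hzc
  have hsin := key Real.sin Real.continuous_sin Real.abs_sin_le_one hzs
  refine ⟨A, hcont.continuousOn, hA0, by rw [hAt]; simpa using hε, ?_⟩
  have hmcos : |(d - m) * Real.cos θ| ≤ 2 * δ := by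
    rw [abs_mul, abs_of_nonneg (by linarith : (0:ℝ) ≤ d - m)]
    have := Real.abs_cos_le_one θ
    nlinarith
  have hmsin : |(d - m) * Real.sin θ| ≤ 2 * δ := by
    rw [abs_mul, abs_of_nonneg (by linarith : (0:ℝ) ≤ d - m)]
    have := Real.abs_sin_le_one θ
    nlinarith
  have ex : |ξ₀.1 + (∫ s in (0:ℝ)..t, Real.cos (A s)) - ξtil.1| ≤ 4 * δ := by
    have e : ξ₀.1 + (∫ s in (0:ℝ)..t, Real.cos (A s)) - ξtil.1
        = ((∫ s in (0:ℝ)..t, Real.cos (A s)) - m * Real.cos θ)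
          - (d - m) * Real.cos θ := by
      linarith [hx, sub_mul d m (Real.cos θ)]
    rw [e]
    calc |((∫ s in (0:ℝ)..t, Real.cos (A s)) - m * Real.cos θ)
          - (d - m) * Real.cos θ|
        ≤ |(∫ s in (0:ℝ)..t, Real.cos (A s)) - m * Real.cos θ|
          + |(d - m) * Real.cos θ| := abs_sub _ _
      _ ≤ 4 * δ := by linarith
  have ey : |ξ₀.2 + (∫ s in (0:ℝ)..t, Real.sin (A s)) - ξtil.2| ≤ 4 * δ := by
    have e : ξ₀.2 + (∫ s in (0:ℝ)..t, Real.sin (A s)) - ξtil.2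
        = ((∫ s in (0:ℝ)..t, Real.sin (A s)) - m * Real.sin θ)
          - (d - m) * Real.sin θ := by
      linarith [hy, sub_mul d m (Real.sin θ)]
    rw [e]
    calc |((∫ s in (0:ℝ)..t, Real.sin (A s)) - m * Real.sin θ)
          - (d - m) * Real.sin θ|
        ≤ |(∫ s in (0:ℝ)..t, Real.sin (A s)) - m * Real.sin θ|
          + |(d - m) * Real.sin θ| := abs_sub _ _
      _ ≤ 4 * δ := by linarith
  unfold eDist2
  simp only
  rw [Real.sqrt_lt' hε]
  obtain ⟨exl, exr⟩ := abs_le.mp ex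
  obtain ⟨eyl, eyr⟩ := abs_le.mp ey
  have hx2 : (ξ₀.1 + (∫ s in (0:ℝ)..t, Real.cos (A s)) - ξtil.1) ^ 2
      ≤ (4 * δ) ^ 2 := sq_le_sq' exl exr
  have hy2 : (ξ₀.2 + (∫ s in (0:ℝ)..t, Real.sin (A s)) - ξtil.2) ^ 2
      ≤ (4 * δ) ^ 2 := sq_le_sq' eyl eyr
  nlinarith [hδ0.le, hδε, hε]
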